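/- arXiv:2605.06687 — 3 statements merged into one kernel-verified Lean document; each statement's English description precedes it below -/
import Mathlib

section
/- For z > 0 and every integer n ≥ 1, the converging factor φ_n(z) = (1/Γ(2n+1)) ∫₀^∞ t^n · (t^{-1/2} e^{-√t}/2)/(t+z) dt of the Stieltjes series with moments (2n)! satisfies φ_n(z) = ∫₀^1 t^{n-1} Φ(t) dt with Φ(t) = (1/(2√z)) · sin(√z · (1/√t − 1)). -/
open MeasureTheory Real intervalIntegral
open Set Filter Topology


lemma laplace_sin (x a : ℝ) (hx : 0 < x) :
    ∫ v in Ioi (0:ℝ), Real.exp (-(x*v)) * Real.sin (a*v) = a / (x^2 + a^2) := by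
  have hD : (0:ℝ) < x^2 + a^2 := by positivity
  set f : ℝ → ℝ := fun v => -(Real.exp (-(x*v)) * (x * Real.sin (a*v) + a * Real.cos (a*v))) / (x^2 + a^2) with hf
  have hderiv : ∀ v : ℝ, HasDerivAt f (Real.exp (-(x*v)) * Real.sin (a*v)) v := by
    intro v
    have h1 : HasDerivAt (fun v : ℝ => -(x*v)) (-x) v := by
      simpa using ((hasDerivAt_id v).const_mul (-x))
    have he : HasDerivAt (fun v : ℝ => Real.exp (-(x*v))) (Real.exp (-(x*v)) * (-x)) v :=
      h1.exp
    have h2 : HasDerivAt (fun v : ℝ => a*v) a v := by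
      simpa using ((hasDerivAt_id v).const_mul a)
    have hs : HasDerivAt (fun v : ℝ => Real.sin (a*v)) (Real.cos (a*v) * a) v :=
      (Real.hasDerivAt_sin (a*v)).comp v h2
    have hc : HasDerivAt (fun v : ℝ => Real.cos (a*v)) (-Real.sin (a*v) * a) v :=
      (Real.hasDerivAt_cos (a*v)).comp v h2
    have := (((he.mul ((hs.const_mul x).add (hc.const_mul a))).neg).div_const (x^2+a^2))
    refine this.congr_deriv ?_
    simp only [Pi.add_apply]
    rw [div_eq_iff hD.ne']
    ring
  have hint : IntegrableOn (fun v => Real.exp (-(x*v)) * Real.sin (a*v)) (Ioi (0:ℝ)) := by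
    refine (exp_neg_integrableOn_Ioi 0 hx).mono' ?_ ?_
    · exact (((Real.continuous_exp.comp (continuous_const.mul continuous_id).neg).mul
        (Real.continuous_sin.comp (continuous_const.mul continuous_id)))).aestronglyMeasurable
    · filter_upwards with v
      rw [norm_mul, Real.norm_eq_abs, Real.norm_eq_abs, Real.abs_exp, neg_mul]
      nlinarith [abs_sin_le_one (a*v), Real.exp_pos (-(x*v)), abs_nonneg (Real.sin (a*v)),
        le_abs_self (Real.sin (a*v))]
  have htend : Tendsto f atTop (𝓝 0) := by
    have hb : ∀ v, ‖f v‖ ≤ ((|x| + |a|) / (x^2+a^2)) * Real.exp (-(x*v)) := by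
      intro v
      rw [hf]
      simp only [Real.norm_eq_abs, abs_div, abs_neg, abs_mul, Real.abs_exp,
        abs_of_pos hD]
      rw [div_le_iff₀ hD]
      have h1 : |x * Real.sin (a*v) + a * Real.cos (a*v)| ≤ |x| + |a| := by
        calc |x * Real.sin (a*v) + a * Real.cos (a*v)|
            ≤ |x * Real.sin (a*v)| + |a * Real.cos (a*v)| := abs_add_le _ _
          _ ≤ |x| + |a| := by
              rw [abs_mul, abs_mul]
              have := abs_sin_le_one (a*v); have := abs_cos_le_one (a*v)
              nlinarith [abs_nonneg x, abs_nonneg a]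
      have he := Real.exp_pos (-(x*v))
      calc Real.exp (-(x*v)) * |x * Real.sin (a*v) + a * Real.cos (a*v)|
          ≤ Real.exp (-(x*v)) * (|x| + |a|) := by nlinarith
        _ = (|x| + |a|) / (x^2+a^2) * Real.exp (-(x*v)) * (x^2+a^2) := by field_simp
    have hg : Tendsto (fun v : ℝ => ((|x| + |a|) / (x^2+a^2)) * Real.exp (-(x*v))) atTop (𝓝 0) := by
      have h2 : Tendsto (fun v : ℝ => Real.exp (-(x*v))) atTop (𝓝 0) := by
        have h3 : Tendsto (fun v : ℝ => x*v) atTop atTop :=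
          Tendsto.const_mul_atTop hx tendsto_id
        exact Real.tendsto_exp_atBot.comp (tendsto_neg_atTop_atBot.comp h3)
      simpa using h2.const_mul ((|x| + |a|) / (x^2+a^2))
    exact squeeze_zero_norm hb hg
  have := integral_Ioi_of_hasDerivAt_of_tendsto' (f := f)
      (f' := fun v => Real.exp (-(x*v)) * Real.sin (a*v)) (fun v _ => hderiv v) hint htend
  rw [this, hf]
  simp [neg_div]

lemma gamma_pow_int (k : ℕ) {r : ℝ} (hr : 0 < r) :
    ∫ t in Ioi (0:ℝ), t ^ k * Real.exp (-(r * t)) = (1/r) ^ (k+1) * Real.Gamma (k+1) := by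
  have h := Real.integral_rpow_mul_exp_neg_mul_Ioi (a := (k:ℝ)+1) (r := r) (by positivity) hr
  have e1 : ∫ t in Ioi (0:ℝ), t ^ ((k:ℝ) + 1 - 1) * Real.exp (-(r * t))
      = ∫ t in Ioi (0:ℝ), t ^ k * Real.exp (-(r * t)) := by
    refine setIntegral_congr_fun measurableSet_Ioi (fun t ht => ?_)
    rw [add_sub_cancel_right, Real.rpow_natCast]
  have e2 : ((1:ℝ)/r) ^ ((k:ℝ)+1) = (1/r)^(k+1) := by
    rw [show ((k:ℝ)+1) = ((k+1 : ℕ) : ℝ) by push_cast; ring, Real.rpow_natCast]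
  rw [e1, e2] at h
  exact h

lemma integral_exp_neg_mul_Ioi' {r : ℝ} (hr : 0 < r) :
    ∫ t in Ioi (0:ℝ), Real.exp (-(r * t)) = 1/r := by
  have := gamma_pow_int 0 hr
  simpa [Real.Gamma_one] using this

lemma fubini_int (k : ℕ) (hk : 1 ≤ k) (a : ℝ) :
    Integrable (Function.uncurry fun x v : ℝ => x ^ k * Real.exp (-(x * (1+v))) * Real.sin (a*v))
      ((volume.restrict (Ioi (0:ℝ))).prod (volume.restrict (Ioi (0:ℝ)))) := by
  have hcont : Continuous (Function.uncurry fun x v : ℝ =>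
      x ^ k * Real.exp (-(x * (1+v))) * Real.sin (a*v)) := by fun_prop
  have key : ∀ x : ℝ, 0 < x → ∀ v : ℝ,
      ‖x ^ k * Real.exp (-(x * (1+v))) * Real.sin (a*v)‖ ≤ x ^ k * Real.exp (-x) * Real.exp (-x * v) := by
    intro x hx v
    rw [norm_mul, norm_mul, Real.norm_eq_abs, Real.norm_eq_abs, Real.norm_eq_abs,
      Real.abs_exp, abs_pow, abs_of_pos hx]
    have h1 : Real.exp (-(x * (1+v))) = Real.exp (-x) * Real.exp (-x * v) := by
      rw [← Real.exp_add]; ring_nf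
    rw [h1]
    have := abs_sin_le_one (a*v)
    have h2 : (0:ℝ) ≤ x ^ k * Real.exp (-x) * Real.exp (-x*v) := by positivity
    nlinarith [abs_nonneg (Real.sin (a*v))]
  have hfx : ∀ x : ℝ, 0 < x → IntegrableOn
      (fun v => x ^ k * Real.exp (-(x * (1+v))) * Real.sin (a*v)) (Ioi (0:ℝ)) := by
    intro x hx
    refine ((exp_neg_integrableOn_Ioi 0 hx).const_mul (x ^ k * Real.exp (-x))).mono'
      (Continuous.aestronglyMeasurable (by fun_prop)) ?_
    filter_upwards with v
    exact key x hx v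
  rw [integrable_prod_iff hcont.aestronglyMeasurable]
  constructor
  · rw [ae_restrict_iff' measurableSet_Ioi]
    filter_upwards with x hx
    exact hfx x hx
  · have hmeas : AEStronglyMeasurable
        (fun x : ℝ => ∫ v in Ioi (0:ℝ), ‖x ^ k * Real.exp (-(x * (1+v))) * Real.sin (a*v)‖)
        (volume.restrict (Ioi (0:ℝ))) :=
      hcont.aestronglyMeasurable.norm.integral_prod_right'
    refine Integrable.mono' (g := fun x => Real.exp (-x) * x ^ ((k:ℝ) - 1)) ?_ hmeas ?_
    · exact Real.GammaIntegral_convergent (by exact_mod_cast Nat.lt_of_lt_of_le Nat.zero_lt_one hk)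
    · rw [ae_restrict_iff' measurableSet_Ioi]
      filter_upwards with x hx
      have hx0 : x ≠ 0 := ne_of_gt hx
      have hintC : IntegrableOn (fun v => x ^ k * Real.exp (-x) * Real.exp (-x * v)) (Ioi (0:ℝ)) :=
        (exp_neg_integrableOn_Ioi 0 hx).const_mul (x ^ k * Real.exp (-x))
      have hle : (∫ v in Ioi (0:ℝ), ‖x ^ k * Real.exp (-(x * (1+v))) * Real.sin (a*v)‖)
          ≤ ∫ v in Ioi (0:ℝ), x ^ k * Real.exp (-x) * Real.exp (-x * v) := by
        refine setIntegral_mono_on ((hfx x hx).norm) hintC measurableSet_Ioi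
          (fun v _ => key x hx v)
      have hval : (∫ v in Ioi (0:ℝ), x ^ k * Real.exp (-x) * Real.exp (-x * v))
          = Real.exp (-x) * x ^ ((k:ℝ) - 1) := by
        rw [MeasureTheory.integral_const_mul]
        have : (∫ v in Ioi (0:ℝ), Real.exp (-x * v)) = 1/x := by
          have h2 : ∀ v : ℝ, Real.exp (-x * v) = Real.exp (-(x * v)) := fun v => by rw [neg_mul]
          simp_rw [h2]
          -- uses integral_exp_neg_mul_Ioi' proved separately; inline here:
          have := Real.integral_rpow_mul_exp_neg_mul_Ioi (a := (1:ℝ)) (r := x) one_pos hx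
          simp only [sub_self, Real.rpow_one, Real.rpow_zero, one_mul, Real.Gamma_one,
            mul_one] at this
          simpa using this
        rw [this]
        have hk1 : x ^ ((k:ℝ) - 1) = x ^ (k-1 : ℕ) := by
          rw [show ((k:ℝ) - 1) = ((k - 1 : ℕ) : ℝ) by
            have : (1:ℕ) ≤ k := hk
            push_cast [this]; ring, Real.rpow_natCast]
        rw [hk1]
        have hpow : x ^ k = x ^ (k-1:ℕ) * x := by
          rw [← pow_succ]
          rw [Nat.sub_add_cancel hk]
        rw [hpow]
        field_simp
      rw [Real.norm_eq_abs, abs_of_nonneg (integral_nonneg (fun v => norm_nonneg _))]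
      rw [← hval]
      exact hle

lemma rhs_cov (a : ℝ) (ha : 0 < a) (m : ℕ) :
    (∫ t in (0:ℝ)..1, t ^ m * ((1 / (2*a)) * Real.sin (a * (1 / Real.sqrt t - 1))))
      = (1/a) * ∫ v in Ioi (0:ℝ), Real.sin (a*v) / (1+v) ^ (2*m+3) := by
  set g : ℝ → ℝ := fun t => t ^ m * ((1 / (2*a)) * Real.sin (a * (1 / Real.sqrt t - 1))) with hg
  set f : ℝ → ℝ := fun v => ((1+v)^2)⁻¹ with hf
  set f' : ℝ → ℝ := fun v => -(((2:ℕ) : ℝ) * (1+v)^1 * 1) / ((1+v)^2)^2 with hf'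
  have hP : ∀ v : ℝ, v ∈ Ioi (0:ℝ) → (0:ℝ) < 1 + v := fun v hv => by
    have : (0:ℝ) < v := hv; linarith
  have hder : ∀ v ∈ Ioi (0:ℝ), HasDerivWithinAt f (f' v) (Ioi (0:ℝ)) v := by
    intro v hv
    have h1 : HasDerivAt (fun v : ℝ => 1 + v) 1 v := by
      simpa using (hasDerivAt_id v).const_add 1
    have h2 : HasDerivAt (fun v : ℝ => (1+v)^2) (((2:ℕ):ℝ) * (1+v)^1 * 1) v := h1.pow 2
    have hv1 := hP v hv
    have h3 := h2.inv (by nlinarith : (1+v)^2 ≠ 0)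
    exact h3.hasDerivWithinAt
  have hinj : InjOn f (Ioi (0:ℝ)) := by
    intro x hx y hy h
    have hx1 := hP x hx; have hy1 := hP y hy
    have h2 : (1+x)^2 = (1+y)^2 := by
      have := inv_inj.mp h
      exact this
    have hle : x ≤ y := by nlinarith
    have hge : y ≤ x := by nlinarith
    linarith
  have himg : f '' (Ioi (0:ℝ)) = Ioo (0:ℝ) 1 := by
    ext t
    constructor
    · rintro ⟨v, hv, rfl⟩
      have h1 := hP v hv
      have hv0 : (0:ℝ) < v := hv
      constructor
      · positivity
      · rw [hf]
        have : (1:ℝ) < (1+v)^2 := by nlinarith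
        simpa using inv_lt_one_of_one_lt₀ this
    · rintro ⟨ht0, ht1⟩
      refine ⟨1 / Real.sqrt t - 1, ?_, ?_⟩
      · have hs0 : 0 < Real.sqrt t := Real.sqrt_pos.mpr ht0
        have hs1 : Real.sqrt t < 1 := by
          rw [show (1:ℝ) = Real.sqrt 1 by simp]
          exact Real.sqrt_lt_sqrt ht0.le ht1
        have h4 : 1 < 1 / Real.sqrt t := by rw [lt_div_iff₀ hs0]; linarith
        rw [mem_Ioi]; linarith
      · have hs0 : 0 < Real.sqrt t := Real.sqrt_pos.mpr ht0
        rw [hf]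
        simp only
        rw [show (1 + (1 / Real.sqrt t - 1)) = 1 / Real.sqrt t by ring]
        rw [div_pow, one_pow, Real.sq_sqrt ht0.le]
        simp [ht0.ne']
  have hmain := integral_image_eq_integral_abs_deriv_smul measurableSet_Ioi hder hinj g
  rw [himg] at hmain
  have hIoo : (∫ t in (0:ℝ)..1, g t) = ∫ t in Ioo (0:ℝ) 1, g t := by
    rw [intervalIntegral.integral_of_le zero_le_one, ← integral_Ioc_eq_integral_Ioo]
  rw [hIoo, hmain]
  rw [← MeasureTheory.integral_const_mul]
  refine setIntegral_congr_fun measurableSet_Ioi (fun v hv => ?_)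
  have h1 := hP v hv
  have h1' : (1+v) ≠ 0 := ne_of_gt h1
  have hsq : Real.sqrt (((1+v)^2)⁻¹) = (1+v)⁻¹ := by
    rw [Real.sqrt_inv, Real.sqrt_sq h1.le]
  simp only [hf, hf', hg, smul_eq_mul]
  rw [hsq]
  rw [show (1 / (1+v)⁻¹ - 1) = v by field_simp; ring]
  rw [abs_div, abs_neg]
  rw [abs_of_nonneg (by positivity : (0:ℝ) ≤ ((2:ℕ):ℝ) * (1+v)^1 * 1),
    abs_of_nonneg (by positivity : (0:ℝ) ≤ ((1+v)^2)^2)]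
  have e1 : (((1+v)^2)⁻¹)^m = ((1+v)^(2*m))⁻¹ := by rw [inv_pow, ← pow_mul]
  rw [e1]
  rw [show ((1+v)^2)^2 = (1+v)^4 by ring]
  have h2 : ((1+v):ℝ)^(2*m) ≠ 0 := by positivity
  have h3 : ((1+v):ℝ)^(2*m+3) ≠ 0 := by positivity
  field_simp
  ring
theorem convergingFactor_integralRep_q0 (z : ℝ) (hz : 0 < z) (n : ℕ) (hn : 1 ≤ n) :
    (1 / Real.Gamma (2 * n + 1)) *
        ∫ t in Set.Ioi (0:ℝ),
          (t : ℝ) ^ n * (t ^ (-(1:ℝ)/2) * Real.exp (-Real.sqrt t) / 2) / (t + z)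
      = ∫ t in (0:ℝ)..1,
          (t : ℝ) ^ (n - 1) *
            ((1 / (2 * Real.sqrt z)) * Real.sin (Real.sqrt z * (1 / Real.sqrt t - 1))) := by
  obtain ⟨m, rfl⟩ : ∃ m, n = m + 1 := ⟨n - 1, (Nat.succ_pred_eq_of_pos hn).symm⟩
  set a := Real.sqrt z with haz
  have ha : 0 < a := Real.sqrt_pos.mpr hz
  have ha2 : a ^ 2 = z := Real.sq_sqrt hz.le
  set n := m + 1
  -- RHS
  have hRHS : (∫ t in (0:ℝ)..1, (t:ℝ) ^ (n - 1) *
        ((1 / (2 * a)) * Real.sin (a * (1 / Real.sqrt t - 1))))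
      = (1/a) * ∫ v in Ioi (0:ℝ), Real.sin (a*v) / (1+v) ^ (2*n+1) := by
    have h1 : n - 1 = m := by simp [n]
    have h2 : 2*n+1 = 2*m+3 := by simp [n]; ring
    rw [h1, h2]
    exact rhs_cov a ha m
  -- Step A : substitution t = x^2
  have hA : (∫ t in Ioi (0:ℝ), (t:ℝ) ^ n * (t ^ (-(1:ℝ)/2) * Real.exp (-Real.sqrt t) / 2) / (t + z))
      = ∫ x in Ioi (0:ℝ), x ^ (2*n) * Real.exp (-x) / (x^2 + z) := by
    rw [← integral_comp_rpow_Ioi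
      (fun t => (t:ℝ) ^ n * (t ^ (-(1:ℝ)/2) * Real.exp (-Real.sqrt t) / 2) / (t + z))
      (p := 2) two_ne_zero]
    refine setIntegral_congr_fun measurableSet_Ioi (fun x hx => ?_)
    have hx0 : (0:ℝ) < x := hx
    have hrp : x ^ (2:ℝ) = x ^ 2 := by
      rw [show (2:ℝ) = ((2:ℕ):ℝ) by norm_num, Real.rpow_natCast]
    have hs : Real.sqrt (x^2) = x := Real.sqrt_sq hx0.le
    have hneg : ((x:ℝ)^2) ^ (-(1:ℝ)/2) = x⁻¹ := by
      rw [← Real.rpow_natCast x 2, ← Real.rpow_mul hx0.le]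
      norm_num
      exact (Real.rpow_neg_one x) ▸ (by rw [Real.rpow_neg_one])
    simp only [smul_eq_mul, hrp, hs, hneg]
    rw [show ((2:ℝ)-1) = 1 by norm_num, Real.rpow_one]
    rw [← pow_mul]
    have hxz : x^2 + z ≠ 0 := by positivity
    field_simp
    ring
  -- Step B : Laplace representation of 1/(x^2+z)
  have hB : (∫ x in Ioi (0:ℝ), x ^ (2*n) * Real.exp (-x) / (x^2 + z))
      = ∫ x in Ioi (0:ℝ), (1/a) *
          ∫ v in Ioi (0:ℝ), x ^ (2*n) * Real.exp (-(x*(1+v))) * Real.sin (a*v) := by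
    refine setIntegral_congr_fun measurableSet_Ioi (fun x hx => ?_)
    have hx0 : (0:ℝ) < x := hx
    have h1 : (∫ v in Ioi (0:ℝ), x ^ (2*n) * Real.exp (-(x*(1+v))) * Real.sin (a*v))
        = x ^ (2*n) * Real.exp (-x) * (a / (x^2 + a^2)) := by
      rw [← laplace_sin x a hx0, ← MeasureTheory.integral_const_mul]
      refine setIntegral_congr_fun measurableSet_Ioi (fun v _ => ?_)
      rw [show Real.exp (-(x*(1+v))) = Real.exp (-x) * Real.exp (-(x*v)) by
        rw [← Real.exp_add]; ring_nf]
      ring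
    rw [h1, ha2]
    have hxz : x^2 + z ≠ 0 := by positivity
    field_simp
  -- Step C+D : Fubini and Gamma integral
  have hk1 : 1 ≤ 2*n := by omega
  have hswap := MeasureTheory.integral_integral_swap (fubini_int (2*n) hk1 a)
  have hD : (∫ v in Ioi (0:ℝ), ∫ x in Ioi (0:ℝ),
        x ^ (2*n) * Real.exp (-(x*(1+v))) * Real.sin (a*v))
      = Real.Gamma (2*n+1) * ∫ v in Ioi (0:ℝ), Real.sin (a*v) / (1+v) ^ (2*n+1) := by
    rw [← MeasureTheory.integral_const_mul]
    refine setIntegral_congr_fun measurableSet_Ioi (fun v hv => ?_)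
    have hv0 : (0:ℝ) < v := hv
    have hr : (0:ℝ) < 1 + v := by linarith
    have h1 : (∫ x in Ioi (0:ℝ), x ^ (2*n) * Real.exp (-(x*(1+v))) * Real.sin (a*v))
        = (∫ x in Ioi (0:ℝ), x ^ (2*n) * Real.exp (-((1+v)*x))) * Real.sin (a*v) := by
      rw [← MeasureTheory.integral_mul_const]
      refine setIntegral_congr_fun measurableSet_Ioi (fun x _ => ?_)
      rw [mul_comm x (1+v)]
    rw [h1, gamma_pow_int (2*n) hr]
    have hP : ((1:ℝ)+v) ^ (2*n+1) ≠ 0 := by positivity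
    have hcast : ((2*n : ℕ) : ℝ) + 1 = 2*(n:ℝ)+1 := by push_cast; ring
    rw [hcast]
    field_simp
    rw [one_div, inv_pow, mul_right_comm, inv_mul_cancel₀ hP, one_mul]
  calc (1 / Real.Gamma (2 * (n:ℝ) + 1)) *
        ∫ t in Set.Ioi (0:ℝ), (t:ℝ) ^ n * (t ^ (-(1:ℝ)/2) * Real.exp (-Real.sqrt t) / 2) / (t + z)
      = (1 / Real.Gamma (2 * (n:ℝ) + 1)) * ((1/a) * ∫ v in Ioi (0:ℝ),
          ∫ x in Ioi (0:ℝ), x ^ (2*n) * Real.exp (-(x*(1+v))) * Real.sin (a*v)) := by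
        rw [hA, hB, MeasureTheory.integral_const_mul, hswap]
    _ = (1/a) * ∫ v in Ioi (0:ℝ), Real.sin (a*v) / (1+v) ^ (2*n+1) := by
        rw [hD]
        have hG : Real.Gamma (2*(n:ℝ)+1) ≠ 0 :=
          ne_of_gt (Real.Gamma_pos_of_pos (by positivity))
        field_simp
    _ = ∫ t in (0:ℝ)..1, (t:ℝ) ^ (n - 1) *
          ((1 / (2 * a)) * Real.sin (a * (1 / Real.sqrt t - 1))) := hRHS.symm
end

section
/- Let Δ denote the forward difference operator in n, Δg(n) = g(n+1) − g(n), and Δ^k its k-th iterate. Then for all k ≥ 1, n ≥ 0, real γ > 0, and t ∈ (0,1): Δ^k{(n+γ)_{k-1} · t^n} = (-1)^k (n+γ)_{k-1} t^n · ₂F₁(-k, k+n+γ-1; n+γ; t), where (a)_m is the Pochhammer symbol and ₂F₁ is the Gauss hypergeometric function (here a terminating polynomial of degree k in t). -/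
open Finset

/-- Pochhammer symbol `(a)_m = a (a+1) ⋯ (a+m-1)` for real `a`. -/
noncomputable def poch (a : ℝ) (m : ℕ) : ℝ := ∏ i ∈ Finset.range m, (a + i)

/-- Forward difference operator in `n`. -/
def fdiff (g : ℕ → ℝ) : ℕ → ℝ := fun n => g (n + 1) - g n

/-- The terminating Gauss hypergeometric polynomial
`₂F₁(-k, b; c; t) = ∑_{j=0}^k ((-k)_j (b)_j / (c)_j) t^j / j!`. -/
noncomputable def twoF1 (k : ℕ) (b c t : ℝ) : ℝ :=
  ∑ j ∈ Finset.range (k + 1),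
    poch (-(k : ℝ)) j * poch b j / (poch c j * (Nat.factorial j)) * t ^ j

lemma fdiff_eq : fdiff = fwdDiff (1:ℕ) := rfl

lemma poch_pos {a : ℝ} (ha : 0 < a) (m : ℕ) : 0 < poch a m :=
  Finset.prod_pos (fun i _ => by positivity)

lemma poch_add (a : ℝ) (m r : ℕ) : poch a (m + r) = poch a m * poch (a + m) r := by
  unfold poch
  rw [Finset.prod_range_add]
  congr 1
  exact Finset.prod_congr rfl fun i _ => by push_cast; ring

lemma poch_neg_nat (k : ℕ) : ∀ j, j ≤ k →
    poch (-(k:ℝ)) j * ((k-j).factorial : ℝ) = (-1)^j * (k.factorial : ℝ) := by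
  intro j
  induction j with
  | zero => intro _; simp [poch]
  | succ j ih =>
    intro hj
    have hj' : j ≤ k := le_of_lt hj
    have hfac : (k - j).factorial = (k - j) * (k - (j+1)).factorial := by
      have : k - j = (k - (j+1)) + 1 := by omega
      rw [this, Nat.factorial_succ]
    have key := ih hj'
    unfold poch at key ⊢
    rw [Finset.prod_range_succ]
    have hkj : -(k:ℝ) + j = -(((k-j:ℕ):ℝ)) := by
      rw [Nat.cast_sub hj']; ring
    rw [hkj]
    rw [hfac] at key
    push_cast at key ⊢
    linear_combination -key

theorem fdiff_pochhammer_hypergeometric (k n : ℕ) (hk : 1 ≤ k) (γ : ℝ) (hγ : 0 < γ)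
    (t : ℝ) (ht : t ∈ Set.Ioo (0:ℝ) 1) :
    (fdiff^[k] (fun m : ℕ => poch ((m : ℝ) + γ) (k - 1) * t ^ m)) n
      = (-1 : ℝ) ^ k * poch ((n : ℝ) + γ) (k - 1) * t ^ n *
          twoF1 k ((k : ℝ) + n + γ - 1) ((n : ℝ) + γ) t := by
  obtain ⟨ht0, ht1⟩ := ht
  rw [fdiff_eq, fwdDiff_iter_eq_sum_shift, twoF1, Finset.mul_sum]
  refine Finset.sum_congr rfl fun j hj => ?_
  have hjk : j ≤ k := Finset.mem_range_succ_iff.mp hj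
  simp only [smul_eq_mul, mul_one, zsmul_eq_mul, Int.cast_mul, Int.cast_pow, Int.cast_neg,
    Int.cast_one, Int.cast_natCast]
  have hngpos : (0:ℝ) < (n:ℝ) + γ := by positivity
  have hPj : poch ((n:ℝ) + γ) j ≠ 0 := ne_of_gt (poch_pos hngpos j)
  have hfacj : ((j.factorial : ℝ)) ≠ 0 := Nat.cast_ne_zero.mpr (Nat.factorial_ne_zero _)
  have hfackj : (((k-j).factorial : ℝ)) ≠ 0 := Nat.cast_ne_zero.mpr (Nat.factorial_ne_zero _)
  have hc : ((n + j : ℕ):ℝ) + γ = ((n:ℝ) + γ) + j := by push_cast; ring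
  have hb : (k:ℝ) + n + γ - 1 = ((n:ℝ) + γ) + ((k-1:ℕ):ℝ) := by
    rw [Nat.cast_sub hk]; push_cast; ring
  have key : poch ((n:ℝ)+γ) j * poch (((n:ℝ)+γ)+j) (k-1)
      = poch ((n:ℝ)+γ) (k-1) * poch (((n:ℝ)+γ)+((k-1:ℕ):ℝ)) j := by
    rw [← poch_add, ← poch_add, add_comm j (k-1)]
  have e3 : poch (((n:ℝ)+γ)+j) (k-1)
      = poch ((n:ℝ)+γ) (k-1) * poch (((n:ℝ)+γ)+((k-1:ℕ):ℝ)) j / poch ((n:ℝ)+γ) j := by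
    rw [eq_div_iff hPj]; linear_combination key
  have e1 : poch (-(k:ℝ)) j = (-1)^j * (k.factorial : ℝ) / ((k-j).factorial : ℝ) := by
    rw [eq_div_iff hfackj]; linear_combination poch_neg_nat k j hjk
  have e2 : (k.choose j : ℝ) = (k.factorial : ℝ) / ((j.factorial : ℝ) * ((k-j).factorial : ℝ)) :=
    Nat.cast_choose ℝ hjk
  have hs : (-1:ℝ)^(k-j) = (-1)^k * (-1)^j := by
    rw [← pow_add]
    have h2 : k + j = (k - j) + 2*j := by omega
    rw [h2, pow_add, pow_mul]; norm_num
  rw [hc, hb, e3, e1, e2, hs]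
  field_simp
  ring
end

section
/- Fix z > 0 and k ≥ 1. The equation k = (√z/2)·cos(θ/2)/sin²(θ/2) has a unique solution θ_s in (0,π), and as k → ∞ one has θ_s ~ √2 · z^{1/4} / √k, i.e. lim_{k→∞} θ_s √k = √2 z^{1/4}. -/
open Real Filter

noncomputable def spCC (z : ℝ) (k : ℕ) : ℝ := z / (4 * (k:ℝ)^2)

noncomputable def spX (z : ℝ) (k : ℕ) : ℝ :=
  (-(spCC z k) + Real.sqrt ((spCC z k)^2 + 4 * spCC z k)) / 2

noncomputable def spTh (z : ℝ) (k : ℕ) : ℝ := 2 * Real.arcsin (Real.sqrt (spX z k))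

lemma spCC_pos {z : ℝ} (hz : 0 < z) {k : ℕ} (hk : 1 ≤ k) : 0 < spCC z k := by
  have hk' : (0:ℝ) < (k:ℝ) := by exact_mod_cast hk
  exact div_pos hz (by positivity)

lemma spX_quad {z : ℝ} (hz : 0 < z) {k : ℕ} (hk : 1 ≤ k) :
    (spX z k)^2 = spCC z k * (1 - spX z k) := by
  have hc := spCC_pos hz hk
  set c := spCC z k with hcdef
  have hnn : (0:ℝ) ≤ c^2 + 4 * c := by positivity
  have hs : (Real.sqrt (c^2 + 4*c))^2 = c^2 + 4*c := Real.sq_sqrt hnn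
  show ((-c + Real.sqrt (c^2 + 4*c))/2)^2 = c * (1 - (-c + Real.sqrt (c^2 + 4*c))/2)
  nlinarith [hs]

lemma spX_pos {z : ℝ} (hz : 0 < z) {k : ℕ} (hk : 1 ≤ k) : 0 < spX z k := by
  have hc := spCC_pos hz hk
  set c := spCC z k with hcdef
  have hnn : (0:ℝ) ≤ c^2 + 4 * c := by positivity
  have hs : (Real.sqrt (c^2 + 4*c))^2 = c^2 + 4*c := Real.sq_sqrt hnn
  have hsnn : 0 ≤ Real.sqrt (c^2 + 4*c) := Real.sqrt_nonneg _
  show 0 < (-c + Real.sqrt (c^2 + 4*c))/2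
  nlinarith [hs, hsnn]

lemma spX_lt_one {z : ℝ} (hz : 0 < z) {k : ℕ} (hk : 1 ≤ k) : spX z k < 1 := by
  have hc := spCC_pos hz hk
  have hq := spX_quad hz hk
  nlinarith [sq_nonneg (spX z k), spX_pos hz hk]

lemma spTh_mem {z : ℝ} (hz : 0 < z) {k : ℕ} (hk : 1 ≤ k) :
    spTh z k ∈ Set.Ioo 0 Real.pi := by
  have hx0 := spX_pos hz hk
  have hx1 := spX_lt_one hz hk
  have h1 : 0 < Real.arcsin (Real.sqrt (spX z k)) :=
    Real.arcsin_pos.2 (Real.sqrt_pos.2 hx0)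
  have h2 : Real.arcsin (Real.sqrt (spX z k)) < Real.pi / 2 :=
    Real.arcsin_lt_pi_div_two.2 (by
      rw [show (1:ℝ) = Real.sqrt 1 by simp]
      exact Real.sqrt_lt_sqrt (le_of_lt hx0) hx1)
  constructor
  · simpa [spTh] using h1
  · show 2 * Real.arcsin (Real.sqrt (spX z k)) < Real.pi
    linarith

lemma spTh_sin {z : ℝ} (hz : 0 < z) {k : ℕ} (hk : 1 ≤ k) :
    Real.sin (spTh z k / 2) = Real.sqrt (spX z k) := by
  have hx0 := spX_pos hz hk
  have hx1 := spX_lt_one hz hk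
  have h1 : -1 ≤ Real.sqrt (spX z k) := le_trans (by norm_num) (Real.sqrt_nonneg _)
  have h2 : Real.sqrt (spX z k) ≤ 1 := by
    rw [show (1:ℝ) = Real.sqrt 1 by simp]
    exact Real.sqrt_le_sqrt hx1.le
  have : spTh z k / 2 = Real.arcsin (Real.sqrt (spX z k)) := by
    unfold spTh; ring
  rw [this, Real.sin_arcsin h1 h2]

lemma spTh_cos {z : ℝ} (hz : 0 < z) {k : ℕ} (hk : 1 ≤ k) :
    Real.cos (spTh z k / 2) = Real.sqrt (1 - spX z k) := by
  have hx0 := spX_pos hz hk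
  have : spTh z k / 2 = Real.arcsin (Real.sqrt (spX z k)) := by
    unfold spTh; ring
  rw [this, Real.cos_arcsin, Real.sq_sqrt hx0.le]

lemma spTh_eq {z : ℝ} (hz : 0 < z) {k : ℕ} (hk : 1 ≤ k) :
    (k : ℝ) = (Real.sqrt z / 2) * Real.cos (spTh z k / 2) / Real.sin (spTh z k / 2) ^ 2 := by
  have hx0 := spX_pos hz hk
  have hx1 := spX_lt_one hz hk
  have hk' : (0:ℝ) < (k:ℝ) := by exact_mod_cast hk
  rw [spTh_sin hz hk, spTh_cos hz hk, Real.sq_sqrt hx0.le]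
  -- goal : k = (√z/2) * √(1 - x) / x
  have hq := spX_quad hz hk
  have hc : spCC z k = z / (4 * (k:ℝ)^2) := rfl
  -- key : (√z/2) * √(1-x) = k * x
  have key : (Real.sqrt z / 2) * Real.sqrt (1 - spX z k) = (k:ℝ) * spX z k := by
    have hA : (0:ℝ) ≤ (Real.sqrt z / 2) * Real.sqrt (1 - spX z k) := by positivity
    have hB : (0:ℝ) ≤ (k:ℝ) * spX z k := by positivity
    have hsq : ((Real.sqrt z / 2) * Real.sqrt (1 - spX z k))^2 = ((k:ℝ) * spX z k)^2 := by
      rw [mul_pow, mul_pow, div_pow, Real.sq_sqrt hz.le, Real.sq_sqrt (by linarith : (0:ℝ) ≤ 1 - spX z k)]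
      rw [hc] at hq
      field_simp at hq ⊢
      nlinarith [hq]
    calc (Real.sqrt z / 2) * Real.sqrt (1 - spX z k)
        = Real.sqrt (((Real.sqrt z / 2) * Real.sqrt (1 - spX z k))^2) := (Real.sqrt_sq hA).symm
      _ = Real.sqrt (((k:ℝ) * spX z k)^2) := by rw [hsq]
      _ = (k:ℝ) * spX z k := Real.sqrt_sq hB
  field_simp [ne_of_gt hx0]
  linarith [key]

lemma sp_strictAnti {z : ℝ} (hz : 0 < z) :
    StrictAntiOn (fun θ : ℝ => (Real.sqrt z / 2) * Real.cos (θ / 2) / Real.sin (θ / 2) ^ 2)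
      (Set.Ioo 0 Real.pi) := by
  intro a ha b hb hab
  have hpi := Real.pi_pos
  have ha2 : 0 < a / 2 := by linarith [ha.1]
  have hb2 : b / 2 < Real.pi / 2 := by linarith [hb.2]
  have hsa : 0 < Real.sin (a / 2) := Real.sin_pos_of_pos_of_lt_pi ha2 (by linarith [ha.2])
  have hsab : Real.sin (a / 2) < Real.sin (b / 2) := by
    apply Real.strictMonoOn_sin (Set.mem_Icc.2 ⟨by linarith, by linarith⟩)
      (Set.mem_Icc.2 ⟨by linarith [hb.1], by linarith⟩) (by linarith)
  have hcb : 0 < Real.cos (b / 2) := Real.cos_pos_of_mem_Ioo ⟨by linarith [hb.1], hb2⟩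
  have hcab : Real.cos (b / 2) < Real.cos (a / 2) :=
    Real.cos_lt_cos_of_nonneg_of_le_pi (by linarith) (by linarith) (by linarith)
  have hz2 : 0 < Real.sqrt z / 2 := by positivity
  show (Real.sqrt z / 2) * Real.cos (b / 2) / Real.sin (b / 2) ^ 2 <
      (Real.sqrt z / 2) * Real.cos (a / 2) / Real.sin (a / 2) ^ 2
  have hsb : 0 < Real.sin (b / 2) := lt_trans hsa hsab
  have hsq : Real.sin (a/2) ^ 2 < Real.sin (b/2) ^ 2 := by nlinarith
  have key : Real.cos (b/2) * Real.sin (a/2)^2 < Real.cos (a/2) * Real.sin (b/2)^2 := by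
    nlinarith [mul_lt_mul_of_pos_left hsq hcb, mul_lt_mul_of_pos_right hcab (pow_pos hsb 2)]
  rw [div_lt_div_iff₀ (pow_pos hsb 2) (pow_pos hsa 2)]
  nlinarith [mul_lt_mul_of_pos_left key hz2]

theorem stationary_point_existence_and_asymptotics (z : ℝ) (hz : 0 < z) :
    ∃ θs : ℕ → ℝ,
      (∀ k : ℕ, 1 ≤ k →
        (θs k ∈ Set.Ioo 0 Real.pi ∧
          (k : ℝ) = (Real.sqrt z / 2) * Real.cos (θs k / 2) / Real.sin (θs k / 2) ^ 2) ∧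
        ∀ θ' ∈ Set.Ioo 0 Real.pi,
          (k : ℝ) = (Real.sqrt z / 2) * Real.cos (θ' / 2) / Real.sin (θ' / 2) ^ 2 →
            θ' = θs k) ∧
      Tendsto (fun k : ℕ => θs k * Real.sqrt k) atTop
        (nhds (Real.sqrt 2 * z ^ ((1:ℝ)/4))) := by
  refine ⟨spTh z, fun k hk => ⟨⟨spTh_mem hz hk, spTh_eq hz hk⟩, ?_⟩, ?_⟩
  · -- uniqueness
    intro θ' hθ' heq
    exact (sp_strictAnti hz).injOn hθ' (spTh_mem hz hk)
      (by rw [← heq, ← spTh_eq hz hk])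
  · -- asymptotics
    -- Step 1 : x_k * k → √z / 2
    have hu : Tendsto (fun k : ℕ => z / (4 * (k:ℝ))) atTop (nhds 0) := by
      have h1 : Tendsto (fun k : ℕ => (z/4) * (1/(k:ℝ))) atTop (nhds ((z/4) * 0)) :=
        tendsto_one_div_atTop_nhds_zero_nat.const_mul (z/4)
      simpa [div_eq_mul_inv, mul_assoc, mul_comm, mul_left_comm] using h1
    have hxk : Tendsto (fun k : ℕ => spX z k * (k:ℝ)) atTop (nhds (Real.sqrt z / 2)) := by
      have hcomp : Tendsto (fun k : ℕ =>
          (-(z/(4*(k:ℝ))) + Real.sqrt ((z/(4*(k:ℝ)))^2 + z)) / 2) atTop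
          (nhds ((-(0:ℝ) + Real.sqrt ((0:ℝ)^2 + z)) / 2)) := by
        exact ((hu.neg.add (((hu.pow 2).add_const z).sqrt)).div_const 2)
      have hval : (-(0:ℝ) + Real.sqrt ((0:ℝ)^2 + z)) / 2 = Real.sqrt z / 2 := by norm_num
      rw [hval] at hcomp
      refine hcomp.congr' ?_
      filter_upwards [eventually_ge_atTop 1] with k hk
      have hk' : (0:ℝ) < (k:ℝ) := by exact_mod_cast hk
      have hc := spCC_pos hz hk
      set c := spCC z k with hcdef
      have hnn : (0:ℝ) ≤ c^2 + 4*c := by positivity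
      have h1 : Real.sqrt (c^2 + 4*c) * (k:ℝ) = Real.sqrt ((c^2 + 4*c) * (k:ℝ)^2) := by
        rw [Real.sqrt_mul hnn, Real.sqrt_sq hk'.le]
      have h2 : (c^2 + 4*c) * (k:ℝ)^2 = (z/(4*(k:ℝ)))^2 + z := by
        rw [hcdef]
        show ((z / (4 * (k:ℝ)^2))^2 + 4*(z / (4 * (k:ℝ)^2))) * (k:ℝ)^2 = (z/(4*(k:ℝ)))^2 + z
        field_simp
      have h3 : c * (k:ℝ) = z / (4*(k:ℝ)) := by
        rw [hcdef]
        show (z / (4 * (k:ℝ)^2)) * (k:ℝ) = z / (4*(k:ℝ))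
        field_simp
      show (-(z/(4*(k:ℝ))) + Real.sqrt ((z/(4*(k:ℝ)))^2 + z)) / 2 = spX z k * (k:ℝ)
      rw [← h2, ← h1, ← h3]
      show (-(c * (k:ℝ)) + Real.sqrt (c^2+4*c) * (k:ℝ)) / 2 = (-c + Real.sqrt (c^2 + 4*c))/2 * (k:ℝ)
      ring
    -- Step 2 : √x_k * √k → √(√z/2)
    have hsx : Tendsto (fun k : ℕ => Real.sqrt (spX z k) * Real.sqrt (k:ℝ)) atTop
        (nhds (Real.sqrt (Real.sqrt z / 2))) := by
      refine hxk.sqrt.congr' ?_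
      filter_upwards [eventually_ge_atTop 1] with k hk
      exact Real.sqrt_mul (spX_pos hz hk).le _
    -- Step 3 : √x_k → 0
    have hx0 : Tendsto (fun k : ℕ => Real.sqrt (spX z k)) atTop (nhds 0) := by
      have h1 : Tendsto (fun k : ℕ => spX z k) atTop (nhds 0) := by
        have h2 : Tendsto (fun k : ℕ => (spX z k * (k:ℝ)) * (1/(k:ℝ))) atTop
            (nhds (Real.sqrt z / 2 * 0)) := hxk.mul tendsto_one_div_atTop_nhds_zero_nat
        rw [mul_zero] at h2
        refine h2.congr' ?_
        filter_upwards [eventually_ge_atTop 1] with k hk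
        have hk' : (0:ℝ) < (k:ℝ) := by exact_mod_cast hk
        field_simp
      simpa using h1.sqrt
    -- Step 4 : arcsin(√x_k)/√x_k → 1
    have hslope : Tendsto (fun t : ℝ => Real.arcsin t / t) (nhdsWithin 0 {(0:ℝ)}ᶜ) (nhds 1) := by
      have hD : HasDerivAt Real.arcsin 1 0 := by
        have := Real.hasDerivAt_arcsin (by norm_num : (0:ℝ) ≠ -1) (by norm_num : (0:ℝ) ≠ 1)
        simpa using this
      have := hasDerivAt_iff_tendsto_slope.1 hD
      refine this.congr (fun t => ?_)
      simp [slope_def_field, div_eq_mul_inv]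
    have hx0' : Tendsto (fun k : ℕ => Real.sqrt (spX z k)) atTop (nhdsWithin 0 {(0:ℝ)}ᶜ) := by
      rw [tendsto_nhdsWithin_iff]
      refine ⟨hx0, ?_⟩
      filter_upwards [eventually_ge_atTop 1] with k hk
      exact (ne_of_gt (Real.sqrt_pos.2 (spX_pos hz hk)))
    have harc : Tendsto (fun k : ℕ => Real.arcsin (Real.sqrt (spX z k)) / Real.sqrt (spX z k))
        atTop (nhds 1) := hslope.comp hx0'
    -- combine
    have hfinal : Tendsto (fun k : ℕ =>
        2 * (Real.arcsin (Real.sqrt (spX z k)) / Real.sqrt (spX z k)) *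
          (Real.sqrt (spX z k) * Real.sqrt (k:ℝ))) atTop
        (nhds (2 * 1 * Real.sqrt (Real.sqrt z / 2))) :=
      (harc.const_mul 2).mul hsx
    have hval2 : 2 * 1 * Real.sqrt (Real.sqrt z / 2) = Real.sqrt 2 * z ^ ((1:ℝ)/4) := by
      have h2 : Real.sqrt 2 * Real.sqrt 2 = 2 := Real.mul_self_sqrt (by norm_num)
      have hq : Real.sqrt (Real.sqrt z) = z ^ ((1:ℝ)/4) := by
        rw [Real.sqrt_eq_rpow, Real.sqrt_eq_rpow, ← Real.rpow_mul hz.le]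
        norm_num
      have h2' : Real.sqrt 2 ≠ 0 := by positivity
      rw [Real.sqrt_div (Real.sqrt_nonneg z), hq]
      field_simp
      linear_combination (-1 : ℝ) * h2
    rw [← hval2]
    refine hfinal.congr' ?_
    filter_upwards [eventually_ge_atTop 1] with k hk
    have hx := spX_pos hz hk
    have hs : Real.sqrt (spX z k) ≠ 0 := ne_of_gt (Real.sqrt_pos.2 hx)
    show 2 * (Real.arcsin (Real.sqrt (spX z k)) / Real.sqrt (spX z k)) *
        (Real.sqrt (spX z k) * Real.sqrt (k:ℝ)) = spTh z k * Real.sqrt (k:ℝ)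
    rw [spTh]
    field_simp
end
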